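/- Fix an integer N ≥ 2 and let H_N = ∑_{x=1}^{N−1} 1/x². For each integer M ≥ 1, define the normalized cotangent state c^{(M)} ∈ ℂ^N by c^{(M)}_0 = 0 and c^{(M)}_x = (1 + i·cot(πx/(MN)))/Z_M for 1 ≤ x ≤ N−1, where Z_M = √(∑_{y=1}^{N−1} 1/sin²(πy/(MN))), and define the harmonic sequence state h ∈ ℂ^N by h_0 = 0 and h_x = 1/(x√H_N) for 1 ≤ x ≤ N−1. Then, as M → ∞, M·‖c^{(M)} − i·h‖ converges to π√(N−1)/(N√H_N), where ‖·‖ is the Euclidean (ℓ²) norm on ℂ^N. -/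

import Mathlib

open Real Filter

set_option maxHeartbeats 1000000

/-- Normalization constant of the cotangent state on `N` points with refinement `M`. -/
noncomputable def cotZ (N M : ℕ) : ℝ :=
  Real.sqrt (∑ y ∈ Finset.Icc 1 (N - 1), 1 / Real.sin (π * y / (M * N)) ^ 2)

/-- The normalized cotangent state `c^{(M)} ∈ ℂ^N`. -/
noncomputable def cotState (N M : ℕ) : EuclideanSpace ℂ (Fin N) := WithLp.toLp 2 fun x =>
  if (x : ℕ) = 0 then 0
  else (1 + Complex.I * (Real.cot (π * (x : ℕ) / (M * N)) : ℂ)) / (cotZ N M : ℂ)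

/-- Squared normalization constant `H_N = ∑_{x=1}^{N−1} 1/x²` of the harmonic sequence state. -/
noncomputable def harmonicSq (N : ℕ) : ℝ := ∑ x ∈ Finset.Icc 1 (N - 1), 1 / (x : ℝ) ^ 2

/-- The normalized harmonic sequence state `h ∈ ℂ^N`. -/
noncomputable def harmonicState (N : ℕ) : EuclideanSpace ℂ (Fin N) := WithLp.toLp 2 fun x =>
  if (x : ℕ) = 0 then 0 else 1 / ((x : ℕ) * (Real.sqrt (harmonicSq N) : ℂ))

/- ---------------- Auxiliary lemmas ---------------- -/

lemma aux_t (c : ℝ) (N : ℕ) :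
    Tendsto (fun M : ℕ => c / ((M : ℝ) * N)) atTop (nhds 0) := by
  have h : (fun M : ℕ => c / ((M : ℝ) * N)) = fun M : ℕ => (c / N) * (1 / (M : ℝ)) := by
    funext M
    rw [mul_one_div, div_div, mul_comm (N : ℝ)]
  rw [h]
  simpa using tendsto_one_div_atTop_nhds_zero_nat.const_mul (c / N)

lemma aux_msin (N k : ℕ) (hN : 0 < N) (hk : 0 < k) :
    Tendsto (fun M : ℕ => (M : ℝ) * Real.sin (π * k / (M * N))) atTop
      (nhds (π * k / N)) := by
  have hslope : Tendsto (fun x : ℝ => Real.sin x / x) (nhdsWithin 0 {(0:ℝ)}ᶜ) (nhds 1) := by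
    have h := hasDerivAt_iff_tendsto_slope.mp (Real.hasDerivAt_sin 0)
    rw [Real.cos_zero] at h
    refine h.congr' ?_
    filter_upwards with x
    simp [slope_def_field]
  have ht0 : Tendsto (fun M : ℕ => π * (k : ℝ) / ((M : ℝ) * N)) atTop (nhds 0) := aux_t _ _
  have htne : ∀ᶠ M : ℕ in atTop, π * (k : ℝ) / ((M : ℝ) * N) ∈ ({(0:ℝ)}ᶜ : Set ℝ) := by
    filter_upwards [eventually_ge_atTop 1] with M hM
    have hM0 : (0:ℝ) < M := by exact_mod_cast hM
    have hN0 : (0:ℝ) < N := by exact_mod_cast hN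
    have hk0 : (0:ℝ) < k := by exact_mod_cast hk
    have : (0:ℝ) < π * k / ((M : ℝ) * N) := by positivity
    exact ne_of_gt this
  have hcomp : Tendsto (fun M : ℕ => Real.sin (π * k / ((M:ℝ) * N)) / (π * k / ((M:ℝ) * N)))
      atTop (nhds 1) :=
    hslope.comp (tendsto_nhdsWithin_iff.mpr ⟨ht0, htne⟩)
  have h2 := (tendsto_const_nhds (x := π * (k:ℝ) / N) (f := atTop)).mul hcomp
  rw [mul_one] at h2
  refine h2.congr' ?_
  filter_upwards [eventually_ge_atTop 1] with M hM
  have hM0 : ((M:ℝ)) ≠ 0 := by exact_mod_cast (by omega : M ≠ 0)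
  have hN0 : ((N:ℝ)) ≠ 0 := by exact_mod_cast (by omega : N ≠ 0)
  have hk0 : ((k:ℝ)) ≠ 0 := by exact_mod_cast (by omega : k ≠ 0)
  field_simp

lemma aux_sinpos {N k M : ℕ} (hN : 2 ≤ N) (hk : 1 ≤ k) (hkN : k ≤ N - 1) (hM : 1 ≤ M) :
    0 < Real.sin (π * k / (M * N)) := by
  have hM0 : (0:ℝ) < M := by exact_mod_cast hM
  have hN0 : (0:ℝ) < N := by exact_mod_cast (by omega : 0 < N)
  have hk0 : (0:ℝ) < k := by exact_mod_cast hk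
  have hkN' : (k:ℝ) < (M:ℝ) * N := by
    have h1 : k < M * N := by
      calc k < N := by omega
        _ ≤ M * N := Nat.le_mul_of_pos_left N (by omega)
    exact_mod_cast h1
  apply Real.sin_pos_of_pos_of_lt_pi
  · positivity
  · rw [mul_div_assoc]
    calc π * ((k:ℝ) / ((M:ℝ) * N)) < π * 1 := by
          apply mul_lt_mul_of_pos_left _ pi_pos
          rw [div_lt_one (by positivity)]
          exact hkN'
      _ = π := mul_one π

lemma harmonicSq_pos {N : ℕ} (hN : 2 ≤ N) : 0 < harmonicSq N := by
  rw [harmonicSq]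
  apply Finset.sum_pos
  · intro x hx
    have h1 : 1 ≤ x := (Finset.mem_Icc.mp hx).1
    have : (0:ℝ) < x := by exact_mod_cast h1
    positivity
  · exact ⟨1, Finset.mem_Icc.mpr ⟨le_refl 1, by omega⟩⟩

lemma cotZ_sq (N M : ℕ) :
    cotZ N M ^ 2 = ∑ y ∈ Finset.Icc 1 (N - 1), 1 / Real.sin (π * y / (M * N)) ^ 2 := by
  rw [cotZ]
  apply Real.sq_sqrt
  apply Finset.sum_nonneg
  intro y _
  positivity

lemma cotZ_nonneg (N M : ℕ) : 0 ≤ cotZ N M := Real.sqrt_nonneg _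

lemma aux_ZdivM {N : ℕ} (hN : 2 ≤ N) :
    Tendsto (fun M : ℕ => cotZ N M / M) atTop
      (nhds ((N:ℝ) * Real.sqrt (harmonicSq N) / π)) := by
  have hH := harmonicSq_pos hN
  have hN0 : (0:ℝ) < N := by exact_mod_cast (by omega : 0 < N)
  have hsq : Tendsto (fun M : ℕ => (cotZ N M / M)^2) atTop
      (nhds ((N:ℝ)^2 * harmonicSq N / π^2)) := by
    have hterm : ∀ y ∈ Finset.Icc 1 (N - 1),
        Tendsto (fun M : ℕ => 1 / ((M:ℝ) * Real.sin (π * y / (M * N)))^2) atTop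
          (nhds (1 / (π * (y:ℝ) / N)^2)) := by
      intro y hy
      obtain ⟨hy1, hy2⟩ := Finset.mem_Icc.mp hy
      have hy0 : (0:ℝ) < y := by exact_mod_cast hy1
      have hL : (0:ℝ) < π * y / N := by positivity
      have h := ((aux_msin N y (by omega) (by omega)).pow 2).inv₀ (by positivity)
      simpa [one_div] using h
    have hsum := tendsto_finset_sum (Finset.Icc 1 (N - 1)) hterm
    have hval : (∑ y ∈ Finset.Icc 1 (N - 1), 1 / (π * (y:ℝ) / N)^2)
        = (N:ℝ)^2 * harmonicSq N / π^2 := by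
      rw [harmonicSq, Finset.mul_sum, Finset.sum_div]
      apply Finset.sum_congr rfl
      intro y hy
      have hy1 := (Finset.mem_Icc.mp hy).1
      have hy0 : ((y:ℝ)) ≠ 0 := by exact_mod_cast (by omega : y ≠ 0)
      have hN0' : ((N:ℝ)) ≠ 0 := ne_of_gt hN0
      field_simp
    rw [hval] at hsum
    refine hsum.congr ?_
    intro M
    rw [div_pow, cotZ_sq, Finset.sum_div]
    apply Finset.sum_congr rfl
    intro y _
    rw [mul_pow]
    ring
  have h2 := hsq.sqrt
  have hval2 : Real.sqrt ((N:ℝ)^2 * harmonicSq N / π^2)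
      = (N:ℝ) * Real.sqrt (harmonicSq N) / π := by
    rw [show (N:ℝ)^2 * harmonicSq N / π^2 = ((N:ℝ) * Real.sqrt (harmonicSq N) / π)^2 by
      rw [div_pow, mul_pow, Real.sq_sqrt hH.le]]
    exact Real.sqrt_sq (by positivity)
  rw [hval2] at h2
  refine h2.congr ?_
  intro M
  exact Real.sqrt_sq (div_nonneg (cotZ_nonneg N M) (Nat.cast_nonneg M))

lemma aux_W {N k : ℕ} (hN : 2 ≤ N) (hk : 1 ≤ k) :
    Tendsto (fun M : ℕ => cotZ N M * Real.sin (π * k / (M * N))) atTop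
      (nhds ((k:ℝ) * Real.sqrt (harmonicSq N))) := by
  have hN0 : ((N:ℝ)) ≠ 0 := by exact_mod_cast (by omega : N ≠ 0)
  have h := (aux_ZdivM hN).mul (aux_msin N k (by omega) (by omega))
  rw [show (N:ℝ) * Real.sqrt (harmonicSq N) / π * (π * k / N)
      = (k:ℝ) * Real.sqrt (harmonicSq N) by field_simp] at h
  refine h.congr' ?_
  filter_upwards [eventually_ge_atTop 1] with M hM
  have hM0 : ((M:ℝ)) ≠ 0 := by exact_mod_cast (by omega : M ≠ 0)
  field_simp

lemma aux_cube (N k y : ℕ) (hN : 2 ≤ N) :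
    Tendsto (fun M : ℕ => (M:ℝ)^3 * ((y:ℝ)^2 * Real.sin (π * k / (M * N))^2
      - (k:ℝ)^2 * Real.sin (π * y / (M * N))^2)) atTop (nhds 0) := by
  have hN0 : (0:ℝ) < N := by exact_mod_cast (by omega : 0 < N)
  set C : ℝ := 5/12 * ((k:ℝ)^2 * (π * (y:ℝ))^4 + (y:ℝ)^2 * (π * (k:ℝ))^4) / (N:ℝ)^4 with hC
  apply squeeze_zero_norm' (a := fun M : ℕ => C * (1 / (M:ℝ)))
  · have hhk : ∀ᶠ M : ℕ in atTop, π * (k:ℝ) / ((M:ℝ) * N) ≤ 1/2 :=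
      (aux_t (π * k) N).eventually (eventually_le_nhds (by norm_num))
    have hhy : ∀ᶠ M : ℕ in atTop, π * (y:ℝ) / ((M:ℝ) * N) ≤ 1/2 :=
      (aux_t (π * y) N).eventually (eventually_le_nhds (by norm_num))
    filter_upwards [eventually_ge_atTop 1, hhk, hhy] with M hM hak hay
    have hM0 : (0:ℝ) < M := by exact_mod_cast hM
    have hMne : ((M:ℝ)) ≠ 0 := ne_of_gt hM0
    have hNne : ((N:ℝ)) ≠ 0 := ne_of_gt hN0
    set a : ℝ := π * (k:ℝ) / ((M:ℝ) * N) with hadef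
    set b : ℝ := π * (y:ℝ) / ((M:ℝ) * N) with hbdef
    have ha0 : 0 ≤ a := by rw [hadef]; positivity
    have hb0 : 0 ≤ b := by rw [hbdef]; positivity
    have h2a : |2*a| ≤ 1 := by rw [abs_of_nonneg (by linarith)]; linarith
    have h2b : |2*b| ≤ 1 := by rw [abs_of_nonneg (by linarith)]; linarith
    have hea : |Real.cos (2*a) - (1 - (2*a)^2/2)| ≤ 5/6 * a^4 := by
      calc |Real.cos (2*a) - (1 - (2*a)^2/2)| ≤ |2*a|^4 * (5/96) := Real.cos_bound h2a
        _ = 5/6 * a^4 := by rw [abs_of_nonneg (by linarith : (0:ℝ) ≤ 2*a)]; ring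
    have heb : |Real.cos (2*b) - (1 - (2*b)^2/2)| ≤ 5/6 * b^4 := by
      calc |Real.cos (2*b) - (1 - (2*b)^2/2)| ≤ |2*b|^4 * (5/96) := Real.cos_bound h2b
        _ = 5/6 * b^4 := by rw [abs_of_nonneg (by linarith : (0:ℝ) ≤ 2*b)]; ring
    obtain ⟨hea1, hea2⟩ := abs_le.mp hea
    obtain ⟨heb1, heb2⟩ := abs_le.mp heb
    have hsa : Real.sin a ^ 2 = (1 - Real.cos (2*a)) / 2 := by
      have h1 := Real.sin_sq a
      have h2 := Real.cos_two_mul a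
      linarith
    have hsb : Real.sin b ^ 2 = (1 - Real.cos (2*b)) / 2 := by
      have h1 := Real.sin_sq b
      have h2 := Real.cos_two_mul b
      linarith
    have hab : (y:ℝ) * a = (k:ℝ) * b := by rw [hadef, hbdef]; ring
    have hgid : (y:ℝ)^2 * Real.sin a ^ 2 - (k:ℝ)^2 * Real.sin b ^ 2
        = ((k:ℝ)^2 * (Real.cos (2*b) - (1 - (2*b)^2/2))
          - (y:ℝ)^2 * (Real.cos (2*a) - (1 - (2*a)^2/2))) / 2 := by
      rw [hsa, hsb]
      linear_combination ((y:ℝ) * a + (k:ℝ) * b) * hab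
    have hgb : |(y:ℝ)^2 * Real.sin a ^ 2 - (k:ℝ)^2 * Real.sin b ^ 2|
        ≤ 5/12 * ((k:ℝ)^2 * b^4 + (y:ℝ)^2 * a^4) := by
      have hb_up := mul_le_mul_of_nonneg_left heb2 (sq_nonneg (k:ℝ))
      have hb_lo := mul_le_mul_of_nonneg_left heb1 (sq_nonneg (k:ℝ))
      have ha_up := mul_le_mul_of_nonneg_left hea2 (sq_nonneg (y:ℝ))
      have ha_lo := mul_le_mul_of_nonneg_left hea1 (sq_nonneg (y:ℝ))
      rw [hgid, abs_le]
      constructor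
      · linarith
      · linarith
    calc ‖(M:ℝ)^3 * ((y:ℝ)^2 * Real.sin a ^ 2 - (k:ℝ)^2 * Real.sin b ^ 2)‖
        = (M:ℝ)^3 * |(y:ℝ)^2 * Real.sin a ^ 2 - (k:ℝ)^2 * Real.sin b ^ 2| := by
          rw [Real.norm_eq_abs, abs_mul, abs_of_nonneg (by positivity : (0:ℝ) ≤ (M:ℝ)^3)]
      _ ≤ (M:ℝ)^3 * (5/12 * ((k:ℝ)^2 * b^4 + (y:ℝ)^2 * a^4)) :=
          mul_le_mul_of_nonneg_left hgb (by positivity)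
      _ = C * (1 / (M:ℝ)) := by
          have key : ∀ x : ℝ, (M:ℝ)^3 * (x / ((M:ℝ) * N))^4 = x^4 / ((M:ℝ) * (N:ℝ)^4) := by
            intro x
            rw [div_pow, mul_pow]
            field_simp
          calc (M:ℝ)^3 * (5/12 * ((k:ℝ)^2 * b^4 + (y:ℝ)^2 * a^4))
              = 5/12 * ((k:ℝ)^2 * ((M:ℝ)^3 * ((π * (y:ℝ)) / ((M:ℝ) * N))^4)
                + (y:ℝ)^2 * ((M:ℝ)^3 * ((π * (k:ℝ)) / ((M:ℝ) * N))^4)) := by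
                rw [hadef, hbdef]; ring
            _ = 5/12 * ((k:ℝ)^2 * ((π * (y:ℝ))^4 / ((M:ℝ) * (N:ℝ)^4))
                + (y:ℝ)^2 * ((π * (k:ℝ))^4 / ((M:ℝ) * (N:ℝ)^4))) := by
                rw [key, key]
            _ = C * (1 / (M:ℝ)) := by
                rw [hC]
                ring
  · simpa using tendsto_one_div_atTop_nhds_zero_nat.const_mul C

lemma aux_term {N k y : ℕ} (hN : 2 ≤ N) (hk : 1 ≤ k) (hkN : k ≤ N - 1)
    (hy : 1 ≤ y) (hyN : y ≤ N - 1) :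
    Tendsto (fun M : ℕ => (M:ℝ) * (Real.sin (π * k / (M * N))^2 / Real.sin (π * y / (M * N))^2
      - (k:ℝ)^2 / (y:ℝ)^2)) atTop (nhds 0) := by
  have hN0 : (0:ℝ) < N := by exact_mod_cast (by omega : 0 < N)
  have hy0 : (0:ℝ) < y := by exact_mod_cast hy
  have hden : Tendsto (fun M : ℕ => (y:ℝ)^2 * ((M:ℝ) * Real.sin (π * y / (M * N)))^2) atTop
      (nhds ((y:ℝ)^2 * (π * (y:ℝ) / N)^2)) :=
    tendsto_const_nhds.mul ((aux_msin N y (by omega) (by omega)).pow 2)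
  have hne : (y:ℝ)^2 * (π * (y:ℝ) / N)^2 ≠ 0 := by positivity
  have h := (aux_cube N k y hN).div hden hne
  rw [zero_div] at h
  refine h.congr' ?_
  filter_upwards [eventually_ge_atTop 1] with M hM
  have hsy := aux_sinpos hN hy hyN hM
  have hsy' : Real.sin (π * y / ((M:ℝ) * N)) ≠ 0 := ne_of_gt hsy
  have hM0 : ((M:ℝ)) ≠ 0 := by exact_mod_cast (by omega : M ≠ 0)
  have hy0' : ((y:ℝ)) ≠ 0 := ne_of_gt hy0
  simp only [Pi.div_apply]
  field_simp
  have e : Real.sin (↑y * π * (↑M)⁻¹ * (↑N)⁻¹) ≠ 0 := by convert hsy' using 2; ring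
  ring_nf
  field_simp
  have e2 : Real.sin (↑y * π / (↑M * ↑N)) ≠ 0 := by convert hsy' using 2; ring
  rw [sub_div, mul_div_cancel_right₀ _ (pow_ne_zero 2 e2)]

lemma aux_Wsq {N k : ℕ} (hN : 2 ≤ N) (hk : 1 ≤ k) (hkN : k ≤ N - 1) :
    Tendsto (fun M : ℕ => (M:ℝ) * ((cotZ N M * Real.sin (π * k / (M * N)))^2
      - (k:ℝ)^2 * harmonicSq N)) atTop (nhds 0) := by
  have hterm : ∀ y ∈ Finset.Icc 1 (N - 1),
      Tendsto (fun M : ℕ => (M:ℝ) * (Real.sin (π * k / (M * N))^2 / Real.sin (π * y / (M * N))^2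
        - (k:ℝ)^2 / (y:ℝ)^2)) atTop (nhds 0) := by
    intro y hy
    obtain ⟨hy1, hy2⟩ := Finset.mem_Icc.mp hy
    exact aux_term hN hk hkN hy1 hy2
  have hsum := tendsto_finset_sum (Finset.Icc 1 (N - 1)) hterm
  rw [Finset.sum_const_zero] at hsum
  refine hsum.congr ?_
  intro M
  rw [mul_pow, cotZ_sq, harmonicSq, Finset.sum_mul, Finset.mul_sum,
    ← Finset.sum_sub_distrib, Finset.mul_sum]
  apply Finset.sum_congr rfl
  intro z _
  ring

lemma aux_inv {N k : ℕ} (hN : 2 ≤ N) (hk : 1 ≤ k) (hkN : k ≤ N - 1) :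
    Tendsto (fun M : ℕ => (M:ℝ) * (1 / (cotZ N M * Real.sin (π * k / (M * N)))
      - 1 / ((k:ℝ) * Real.sqrt (harmonicSq N)))) atTop (nhds 0) := by
  have hH := harmonicSq_pos hN
  have hk0 : (0:ℝ) < k := by exact_mod_cast hk
  have hsH : 0 < Real.sqrt (harmonicSq N) := Real.sqrt_pos.mpr hH
  have hL0 : 0 < (k:ℝ) * Real.sqrt (harmonicSq N) := mul_pos hk0 hsH
  have hW := aux_W (k := k) hN hk
  have hWpos : ∀ᶠ M : ℕ in atTop, 0 < cotZ N M * Real.sin (π * k / (M * N)) :=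
    hW.eventually (eventually_gt_nhds hL0)
  have hdiv : Tendsto (fun M : ℕ => cotZ N M * Real.sin (π * k / (M * N))
      + (k:ℝ) * Real.sqrt (harmonicSq N)) atTop
      (nhds ((k:ℝ) * Real.sqrt (harmonicSq N) + (k:ℝ) * Real.sqrt (harmonicSq N))) :=
    hW.add tendsto_const_nhds
  have h1 := (aux_Wsq hN hk hkN).div hdiv (by linarith : (k:ℝ) * Real.sqrt (harmonicSq N)
      + (k:ℝ) * Real.sqrt (harmonicSq N) ≠ 0)
  rw [zero_div] at h1
  have hsq : ((k:ℝ) * Real.sqrt (harmonicSq N))^2 = (k:ℝ)^2 * harmonicSq N := by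
    rw [mul_pow, Real.sq_sqrt hH.le]
  have h1' : Tendsto (fun M : ℕ => (M:ℝ) * (cotZ N M * Real.sin (π * k / (M * N))
      - (k:ℝ) * Real.sqrt (harmonicSq N))) atTop (nhds 0) := by
    refine h1.congr' ?_
    filter_upwards [hWpos] with M hWp
    have hne : cotZ N M * Real.sin (π * k / (M * N))
        + (k:ℝ) * Real.sqrt (harmonicSq N) ≠ 0 := by linarith
    simp only [Pi.div_apply]
    rw [div_eq_iff hne]
    linear_combination (M:ℝ) * hsq
  have hWL : Tendsto (fun M : ℕ => cotZ N M * Real.sin (π * k / (M * N))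
      * ((k:ℝ) * Real.sqrt (harmonicSq N))) atTop
      (nhds ((k:ℝ) * Real.sqrt (harmonicSq N) * ((k:ℝ) * Real.sqrt (harmonicSq N)))) :=
    hW.mul_const _
  have h2 := h1'.neg.div hWL (by positivity)
  simp only [neg_zero, zero_div] at h2
  refine h2.congr' ?_
  filter_upwards [hWpos] with M hWp
  have hWne : cotZ N M * Real.sin (π * k / (M * N)) ≠ 0 := ne_of_gt hWp
  have hLne : (k:ℝ) * Real.sqrt (harmonicSq N) ≠ 0 := ne_of_gt hL0
  have hZne : cotZ N M ≠ 0 := left_ne_zero_of_mul hWne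
  have hSne : Real.sin (π * k / (M * N)) ≠ 0 := right_ne_zero_of_mul hWne
  simp only [Pi.div_apply, Pi.neg_apply]
  field_simp
  ring

lemma aux_B {N k : ℕ} (hN : 2 ≤ N) (hk : 1 ≤ k) (hkN : k ≤ N - 1) :
    Tendsto (fun M : ℕ => (M:ℝ) * (Real.cot (π * k / (M * N)) / cotZ N M
      - 1 / ((k:ℝ) * Real.sqrt (harmonicSq N)))) atTop (nhds 0) := by
  have hcos : Tendsto (fun M : ℕ => Real.cos (π * k / ((M:ℝ) * N))) atTop (nhds 1) := by
    have h := (Real.continuous_cos.tendsto 0).comp (aux_t (π * k) N)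
    simpa [Function.comp_def] using h
  have hc1 : Tendsto (fun M : ℕ => (M:ℝ) * (Real.cos (π * k / ((M:ℝ) * N)) - 1)) atTop
      (nhds 0) := by
    apply squeeze_zero_norm' (a := fun M : ℕ => (π * (k:ℝ) / N)^2 / 2 * (1 / (M:ℝ)))
    · filter_upwards [eventually_ge_atTop 1] with M hM
      have hM0 : (0:ℝ) < M := by exact_mod_cast hM
      have hMne : ((M:ℝ)) ≠ 0 := ne_of_gt hM0
      have hN0 : ((N:ℝ)) ≠ 0 := by exact_mod_cast (by omega : N ≠ 0)
      set t : ℝ := π * (k:ℝ) / ((M:ℝ) * N) with htdef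
      have h1 : Real.cos t ≤ 1 := Real.cos_le_one t
      have h2 : 1 - t^2/2 ≤ Real.cos t := Real.one_sub_sq_div_two_le_cos
      have h3 : |Real.cos t - 1| ≤ t^2/2 := by
        rw [abs_le]
        constructor
        · linarith
        · nlinarith [sq_nonneg t]
      calc ‖(M:ℝ) * (Real.cos t - 1)‖ = (M:ℝ) * |Real.cos t - 1| := by
            rw [Real.norm_eq_abs, abs_mul, abs_of_nonneg hM0.le]
        _ ≤ (M:ℝ) * (t^2/2) := mul_le_mul_of_nonneg_left h3 hM0.le
        _ = (π * (k:ℝ) / N)^2 / 2 * (1 / (M:ℝ)) := by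
            rw [htdef]
            field_simp
    · have h := tendsto_one_div_atTop_nhds_zero_nat.const_mul ((π * (k:ℝ) / N)^2 / 2)
      rw [mul_zero] at h
      exact h
  have hinv := aux_inv hN hk hkN
  have hmain := (hcos.mul hinv).add
    (hc1.mul_const (1 / ((k:ℝ) * Real.sqrt (harmonicSq N))))
  rw [mul_zero, zero_mul, add_zero] at hmain
  refine hmain.congr ?_
  intro M
  rw [Real.cot_eq_cos_div_sin]
  ring

lemma aux_MZ {N : ℕ} (hN : 2 ≤ N) :
    Tendsto (fun M : ℕ => (M:ℝ) / cotZ N M) atTop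
      (nhds (π / ((N:ℝ) * Real.sqrt (harmonicSq N)))) := by
  have hH := harmonicSq_pos hN
  have hN0 : (0:ℝ) < N := by exact_mod_cast (by omega : 0 < N)
  have hsH : 0 < Real.sqrt (harmonicSq N) := Real.sqrt_pos.mpr hH
  have h := (aux_ZdivM hN).inv₀
    (ne_of_gt (div_pos (mul_pos hN0 hsH) pi_pos))
  rw [← one_div, one_div_div] at h
  refine h.congr ?_
  intro M
  rw [← one_div, one_div_div]

/-- Lemma 4 (firstpass), asymptotic form: as `M → ∞`,
`M·‖c^{(M)} − i·h‖ → π√(N−1)/(N√H_N)`. -/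
theorem cot_state_approx_harmonic (N : ℕ) (hN : 2 ≤ N) :
    Tendsto (fun M : ℕ => (M : ℝ) * ‖cotState N M - Complex.I • harmonicState N‖) atTop
      (nhds (π * Real.sqrt ((N : ℝ) - 1) / (N * Real.sqrt (harmonicSq N)))) := by
  have hH := harmonicSq_pos hN
  have hN0 : (0:ℝ) < N := by exact_mod_cast (by omega : 0 < N)
  have hsH : 0 < Real.sqrt (harmonicSq N) := Real.sqrt_pos.mpr hH
  set c : ℝ := π^2 / ((N:ℝ)^2 * harmonicSq N) with hc
  have hkey : Tendsto (fun M : ℕ => ∑ x : Fin N,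
      (M:ℝ)^2 * ‖(cotState N M - Complex.I • harmonicState N) x‖^2) atTop
      (nhds (∑ x : Fin N, if (x:ℕ) = 0 then 0 else c)) := by
    apply tendsto_finset_sum
    intro x _
    by_cases hx : (x:ℕ) = 0
    · rw [if_pos hx]
      have hzero : ∀ M : ℕ, (cotState N M - Complex.I • harmonicState N) x = 0 := by
        intro M
        simp [cotState, harmonicState, hx]
      have heq : (fun M : ℕ => (M:ℝ)^2 * ‖(cotState N M - Complex.I • harmonicState N) x‖^2)
          = fun _ : ℕ => (0:ℝ) := by
        funext M
        rw [hzero M]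
        simp
      rw [heq]
      exact tendsto_const_nhds
    · rw [if_neg hx]
      have hk1 : 1 ≤ (x:ℕ) := by omega
      have hkN : (x:ℕ) ≤ N - 1 := by have := x.isLt; omega
      have hk0 : (0:ℝ) < ((x:ℕ):ℝ) := by exact_mod_cast hk1
      have hterm : ∀ M : ℕ, (M:ℝ)^2 * ‖(cotState N M - Complex.I • harmonicState N) x‖^2
          = ((M:ℝ) / cotZ N M)^2
            + ((M:ℝ) * (Real.cot (π * (x:ℕ) / (M * N)) / cotZ N M
              - 1 / (((x:ℕ):ℝ) * Real.sqrt (harmonicSq N))))^2 := by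
        intro M
        have happ : (cotState N M - Complex.I • harmonicState N) x
            = ((1 / cotZ N M : ℝ) : ℂ)
              + ((Real.cot (π * (x:ℕ) / (M * N)) / cotZ N M
                - 1 / (((x:ℕ):ℝ) * Real.sqrt (harmonicSq N)) : ℝ) : ℂ) * Complex.I := by
          simp only [PiLp.sub_apply, PiLp.smul_apply, cotState, harmonicState, if_neg hx,
            smul_eq_mul]
          push_cast
          ring
        rw [happ, Complex.sq_norm, Complex.normSq_add_mul_I]
        ring
      have hA := (aux_MZ hN).pow 2
      have hB := (aux_B hN hk1 hkN).pow 2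
      have hsum := hA.add hB
      have hval : (π / ((N:ℝ) * Real.sqrt (harmonicSq N)))^2 + (0:ℝ)^2 = c := by
        rw [hc, div_pow, mul_pow, Real.sq_sqrt hH.le]
        ring
      rw [hval] at hsum
      refine hsum.congr ?_
      intro M
      exact (hterm M).symm
  have hsumval : (∑ x : Fin N, if (x:ℕ) = 0 then (0:ℝ) else c) = ((N:ℝ) - 1) * c := by
    rw [Fin.sum_univ_eq_sum_range (fun i => if i = 0 then (0:ℝ) else c)]
    have h1 : ∀ i ∈ Finset.range N, (if i = 0 then (0:ℝ) else c)
        = c - (if i = 0 then c else 0) := by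
      intro i _
      by_cases h : i = 0 <;> simp [h]
    rw [Finset.sum_congr rfl h1, Finset.sum_sub_distrib, Finset.sum_const, Finset.card_range,
      Finset.sum_ite_eq' (Finset.range N) 0 (fun _ => c)]
    simp only [Finset.mem_range, if_pos (by omega : 0 < N), nsmul_eq_mul]
    ring
  rw [hsumval] at hkey
  have hfinal := hkey.sqrt
  have hN1 : (0:ℝ) ≤ (N:ℝ) - 1 := by
    have h : (1:ℝ) ≤ N := by exact_mod_cast (by omega : 1 ≤ N)
    linarith
  have htarget : Real.sqrt (((N:ℝ) - 1) * c)
      = π * Real.sqrt ((N:ℝ) - 1) / ((N:ℝ) * Real.sqrt (harmonicSq N)) := by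
    rw [show ((N:ℝ) - 1) * c
        = (π * Real.sqrt ((N:ℝ) - 1) / ((N:ℝ) * Real.sqrt (harmonicSq N)))^2 by
      rw [hc, div_pow, mul_pow, mul_pow, Real.sq_sqrt hN1, Real.sq_sqrt hH.le]
      ring]
    exact Real.sqrt_sq (by positivity)
  rw [htarget] at hfinal
  refine hfinal.congr ?_
  intro M
  rw [EuclideanSpace.norm_eq, ← Finset.mul_sum, Real.sqrt_mul (sq_nonneg _),
    Real.sqrt_sq (Nat.cast_nonneg M)]
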